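/- For every integer k ≥ 1, tan(π / 2^{k+1}) = √(2 − c_{k−1}) / c_k. -/
import Mathlib


open Real

/-- The nested radicals `c 0 = 0`, `c (k+1) = √(2 + c k)`. -/
noncomputable def c : ℕ → ℝ
  | 0 => 0
  | k + 1 => Real.sqrt (2 + c k)

lemma c_eq (k : ℕ) : c k = 2 * Real.cos (Real.pi / 2 ^ (k + 1)) := by
  induction k with
  | zero => simp [c]
  | succ n ih =>
    have h1 : (0:ℝ) < Real.pi / 2 ^ (n + 2) := by positivity
    have h2 : Real.pi / 2 ^ (n + 2) ≤ Real.pi / 2 := by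
      apply div_le_div_of_nonneg_left Real.pi_pos.le (by norm_num)
      calc (2:ℝ) = 2 ^ 1 := by norm_num
        _ ≤ 2 ^ (n + 2) := by apply pow_le_pow_right₀ (by norm_num); omega
    have hcos : 0 ≤ Real.cos (Real.pi / 2 ^ (n + 2)) :=
      Real.cos_nonneg_of_mem_Icc ⟨by linarith [Real.pi_pos], h2⟩
    have half : Real.pi / 2 ^ (n + 1) / 2 = Real.pi / 2 ^ (n + 2) := by
      rw [div_div]; ring_nf
    have hsq := Real.cos_sq (Real.pi / 2 ^ (n + 2))
    have hdbl : 2 * (Real.pi / 2 ^ (n + 2)) = Real.pi / 2 ^ (n + 1) := by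
      rw [← half]; ring
    rw [hdbl] at hsq
    have : 2 + c n = (2 * Real.cos (Real.pi / 2 ^ (n + 2))) ^ 2 := by
      rw [ih]; nlinarith [hsq]
    rw [show c (n+1) = Real.sqrt (2 + c n) from rfl, this, Real.sqrt_sq (by linarith)]

/-- For every integer `k ≥ 1`, `tan (π / 2 ^ (k + 1)) = √(2 - c (k - 1)) / c k`. -/
theorem tan_pi_div_two_pow (k : ℕ) (hk : 1 ≤ k) :
    Real.tan (Real.pi / 2 ^ (k + 1)) = Real.sqrt (2 - c (k - 1)) / c k := by
  have h1 : (0:ℝ) < Real.pi / 2 ^ (k + 1) := by positivity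
  have h2 : Real.pi / 2 ^ (k + 1) ≤ Real.pi / 2 := by
    apply div_le_div_of_nonneg_left Real.pi_pos.le (by norm_num)
    calc (2:ℝ) = 2 ^ 1 := by norm_num
      _ ≤ 2 ^ (k + 1) := by apply pow_le_pow_right₀ (by norm_num); omega
  have hsin : 0 ≤ Real.sin (Real.pi / 2 ^ (k + 1)) :=
    Real.sin_nonneg_of_nonneg_of_le_pi h1.le (by linarith [Real.pi_pos])
  have half : Real.pi / 2 ^ k / 2 = Real.pi / 2 ^ (k + 1) := by
    rw [div_div]; ring_nf
  have hsq := Real.sin_sq (Real.pi / 2 ^ (k + 1))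
  have hcsq := Real.cos_sq (Real.pi / 2 ^ (k + 1))
  have hdbl : 2 * (Real.pi / 2 ^ (k + 1)) = Real.pi / 2 ^ k := by
    rw [← half]; ring
  rw [hdbl] at hcsq
  have hk1 : k - 1 + 1 = k := by omega
  have hnum : 2 - c (k - 1) = (2 * Real.sin (Real.pi / 2 ^ (k + 1))) ^ 2 := by
    rw [c_eq, hk1]; nlinarith [hsq, hcsq]
  rw [hnum, Real.sqrt_sq (by linarith), c_eq, Real.tan_eq_sin_div_cos,
    mul_div_mul_left _ _ (by norm_num : (2:ℝ) ≠ 0)]
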